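/- arXiv:2509.14811 — 3 statements merged into one kernel-verified Lean document; each statement's English description precedes it below -/
import Mathlib

section
/- (Almost-everywhere form of Lemma 4.1.) Let Ω ⊂ ℝ^N be measurable, let p > 1, α, β > 0, and let h : Ω → [0,∞) be measurable and finite almost everywhere. Let a : Ω × ℝ × ℝ^d → ℝ^d be such that (s,ξ) ↦ a(x,s,ξ) is continuous for a.e. x ∈ Ω and, for a.e. x ∈ Ω, every s ∈ ℝ and every ξ ≠ η ∈ ℝ^d: a(x,s,ξ)·ξ ≥ α|ξ|^p, |a(x,s,ξ)| ≤ β(h(x) + |s|^{p−1} + |ξ|^{p−1}), and (a(x,s,ξ) − a(x,s,η))·(ξ − η) > 0. Let (u_n) and u be real-valued measurable functions on Ω with u_n → u a.e., and let (V_n) and V be measurable ℝ^d-valued functions on Ω such that [a(x,u_n(x),V_n(x)) − a(x,u(x),V(x))]·(V_n(x) − V(x)) → 0 for a.e. x ∈ Ω. Then V_n → V a.e. in Ω. -/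
open MeasureTheory ENNReal Filter
open scoped RealInnerProductSpace

private lemma aux_bound (p α : ℝ) (hp : 1 < p) (hα : 0 < α)
    (A B C : ℝ) (hA : 0 ≤ A) (hB : 0 ≤ B) (hC : 0 ≤ C) :
    ∃ M : ℝ, ∀ t : ℝ, 0 ≤ t → α * t ^ p ≤ A + B * t ^ (p - 1) + C * t → t ≤ M := by
  set q : ℝ := max (p - 1) 1 with hqdef
  have hq1 : (1 : ℝ) ≤ q := le_max_right _ _
  have hqp : q < p := max_lt (by linarith) hp
  set K : ℝ := (A + B + C) / α with hK
  refine ⟨max 1 (K ^ (1 / (p - q))), fun t ht hineq => ?_⟩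
  rcases le_or_gt t 1 with h1 | h1
  · exact le_trans h1 (le_max_left _ _)
  have ht1 : (1 : ℝ) ≤ t := h1.le
  have htpos : 0 < t := lt_trans one_pos h1
  -- bound the three terms by (A+B+C) * t ^ q
  have h1q : (1 : ℝ) ≤ t ^ q := by
    calc (1 : ℝ) = t ^ (0 : ℝ) := (Real.rpow_zero t).symm
    _ ≤ t ^ q := Real.rpow_le_rpow_of_exponent_le ht1 (by linarith)
  have hAq : A ≤ A * t ^ q := le_mul_of_one_le_right hA h1q
  have hBq : B * t ^ (p - 1) ≤ B * t ^ q :=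
    mul_le_mul_of_nonneg_left
      (Real.rpow_le_rpow_of_exponent_le ht1 (le_max_left _ _)) hB
  have hCq : C * t ≤ C * t ^ q := by
    have : t = t ^ (1 : ℝ) := (Real.rpow_one t).symm
    refine mul_le_mul_of_nonneg_left ?_ hC
    calc t = t ^ (1 : ℝ) := (Real.rpow_one t).symm
    _ ≤ t ^ q := Real.rpow_le_rpow_of_exponent_le ht1 hq1
  have hmain : α * t ^ p ≤ (A + B + C) * t ^ q := by
    calc α * t ^ p ≤ A + B * t ^ (p - 1) + C * t := hineq
    _ ≤ A * t ^ q + B * t ^ q + C * t ^ q := by linarith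
    _ = (A + B + C) * t ^ q := by ring
  have hsplit : t ^ p = t ^ (p - q) * t ^ q := by
    rw [← Real.rpow_add htpos]; ring_nf
  have hqpos : 0 < t ^ q := Real.rpow_pos_of_pos htpos q
  have hstep : t ^ (p - q) ≤ K := by
    rw [hK, le_div_iff₀ hα]
    have : α * t ^ (p - q) * t ^ q ≤ (A + B + C) * t ^ q := by
      calc α * t ^ (p - q) * t ^ q = α * t ^ p := by rw [hsplit]; ring
      _ ≤ (A + B + C) * t ^ q := hmain
    have := (mul_le_mul_iff_of_pos_right hqpos).mp this
    linarith
  have hpq : 0 < p - q := by linarith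
  have : (t ^ (p - q)) ^ (1 / (p - q)) ≤ K ^ (1 / (p - q)) :=
    Real.rpow_le_rpow (Real.rpow_nonneg ht _) hstep (by positivity)
  rw [← Real.rpow_mul ht, mul_one_div, div_self hpq.ne', Real.rpow_one] at this
  exact le_trans this (le_max_right _ _)

private lemma key_lemma {d : ℕ} (p α β hx : ℝ) (hp : 1 < p) (hα : 0 < α) (hβ : 0 < β)
    (hhx : 0 ≤ hx)
    (a : ℝ → EuclideanSpace ℝ (Fin d) → EuclideanSpace ℝ (Fin d))
    (cont : Continuous fun sξ : ℝ × EuclideanSpace ℝ (Fin d) => a sξ.1 sξ.2)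
    (coerc : ∀ s ξ, α * ‖ξ‖ ^ p ≤ ⟪a s ξ, ξ⟫)
    (growth : ∀ s ξ, ‖a s ξ‖ ≤ β * (hx + |s| ^ (p - 1) + ‖ξ‖ ^ (p - 1)))
    (mono : ∀ s ξ η, ξ ≠ η → 0 < ⟪a s ξ - a s η, ξ - η⟫)
    (vn : ℕ → ℝ) (v : ℝ) (hv : Tendsto vn atTop (nhds v))
    (Wn : ℕ → EuclideanSpace ℝ (Fin d)) (W : EuclideanSpace ℝ (Fin d))
    (he : Tendsto (fun n => ⟪a (vn n) (Wn n) - a v W, Wn n - W⟫) atTop (nhds 0)) :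
    Tendsto Wn atTop (nhds W) := by
  -- bound on vn
  obtain ⟨Mv, hMv⟩ : ∃ Mv : ℝ, ∀ n, |vn n| ≤ Mv := by
    obtain ⟨Mv, hMv⟩ := (hv.abs.bddAbove_range).exists_ge (|v|)
    exact ⟨Mv, fun n => hMv.2 _ ⟨n, rfl⟩⟩
  have hMv0 : 0 ≤ Mv := le_trans (abs_nonneg _) (hMv 0)
  -- bound on e n
  obtain ⟨Me, hMe0, hMe⟩ : ∃ Me : ℝ, 0 ≤ Me ∧
      ∀ n, ⟪a (vn n) (Wn n) - a v W, Wn n - W⟫ ≤ Me := by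
    obtain ⟨Me, hMe⟩ := he.bddAbove_range.exists_ge 0
    exact ⟨Me, hMe.1, fun n => hMe.2 _ ⟨n, rfl⟩⟩
  -- boundedness of Wn
  have hp1 : (0 : ℝ) ≤ p - 1 := by linarith
  set A : ℝ := Me + β * (hx + Mv ^ (p - 1)) * ‖W‖ + ‖a v W‖ * ‖W‖ with hA
  set B : ℝ := β * ‖W‖ with hB
  set C : ℝ := ‖a v W‖ with hC
  have hineq : ∀ n, α * ‖Wn n‖ ^ p ≤ A + B * ‖Wn n‖ ^ (p - 1) + C * ‖Wn n‖ := by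
    intro n
    have e1 : α * ‖Wn n‖ ^ p ≤ ⟪a (vn n) (Wn n), Wn n⟫ := coerc _ _
    have e2 : ⟪a (vn n) (Wn n), Wn n⟫
        = ⟪a (vn n) (Wn n) - a v W, Wn n - W⟫ + ⟪a (vn n) (Wn n), W⟫
          + ⟪a v W, Wn n - W⟫ := by
      simp only [inner_sub_left, inner_sub_right]; ring
    have e3 : ⟪a (vn n) (Wn n), W⟫ ≤ ‖a (vn n) (Wn n)‖ * ‖W‖ :=
      real_inner_le_norm _ _
    have e4 : ⟪a v W, Wn n - W⟫ ≤ ‖a v W‖ * ‖Wn n - W‖ := real_inner_le_norm _ _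
    have e5 : ‖Wn n - W‖ ≤ ‖Wn n‖ + ‖W‖ := norm_sub_le _ _
    have e6 : ‖a (vn n) (Wn n)‖ ≤ β * (hx + Mv ^ (p - 1) + ‖Wn n‖ ^ (p - 1)) := by
      refine le_trans (growth _ _) ?_
      have : |vn n| ^ (p - 1) ≤ Mv ^ (p - 1) :=
        Real.rpow_le_rpow (abs_nonneg _) (hMv n) hp1
      gcongr
    have e7 : ⟪a (vn n) (Wn n), W⟫ ≤ β * (hx + Mv ^ (p - 1) + ‖Wn n‖ ^ (p - 1)) * ‖W‖ := by
      refine le_trans e3 ?_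
      exact mul_le_mul_of_nonneg_right e6 (norm_nonneg _)
    have e8 : ⟪a v W, Wn n - W⟫ ≤ ‖a v W‖ * (‖Wn n‖ + ‖W‖) :=
      le_trans e4 (mul_le_mul_of_nonneg_left e5 (norm_nonneg _))
    have := hMe n
    rw [hA, hB, hC]
    calc α * ‖Wn n‖ ^ p ≤ ⟪a (vn n) (Wn n), Wn n⟫ := e1
    _ = ⟪a (vn n) (Wn n) - a v W, Wn n - W⟫ + ⟪a (vn n) (Wn n), W⟫
          + ⟪a v W, Wn n - W⟫ := e2
    _ ≤ Me + β * (hx + Mv ^ (p - 1) + ‖Wn n‖ ^ (p - 1)) * ‖W‖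
          + ‖a v W‖ * (‖Wn n‖ + ‖W‖) := by
        gcongr
    _ = (Me + β * (hx + Mv ^ (p - 1)) * ‖W‖ + ‖a v W‖ * ‖W‖)
          + β * ‖W‖ * ‖Wn n‖ ^ (p - 1) + ‖a v W‖ * ‖Wn n‖ := by ring
  have hA0 : 0 ≤ A := by
    rw [hA]
    have : (0:ℝ) ≤ Mv ^ (p - 1) := Real.rpow_nonneg hMv0 _
    positivity
  have hB0 : 0 ≤ B := by rw [hB]; positivity
  have hC0 : 0 ≤ C := norm_nonneg _
  obtain ⟨M, hM⟩ := aux_bound p α hp hα A B C hA0 hB0 hC0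
  have hWbd : ∀ n, ‖Wn n‖ ≤ M := fun n => hM _ (norm_nonneg _) (hineq n)
  -- subsequence argument
  refine tendsto_of_subseq_tendsto fun ns hns => ?_
  obtain ⟨L, -, φ, hφ, hLlim⟩ :=
    tendsto_subseq_of_bounded (Metric.isBounded_closedBall (x := (0 : EuclideanSpace ℝ (Fin d))) (r := M))
      (x := fun n => Wn (ns n)) (fun n => by
        simpa [Metric.mem_closedBall, dist_eq_norm] using hWbd (ns n))
  refine ⟨φ, ?_⟩
  have hns' : Tendsto (fun n => ns (φ n)) atTop atTop := hns.comp hφ.tendsto_atTop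
  have hvlim : Tendsto (fun n => vn (ns (φ n))) atTop (nhds v) := hv.comp hns'
  have hWlim : Tendsto (fun n => Wn (ns (φ n))) atTop (nhds L) := hLlim
  have halim : Tendsto (fun n => a (vn (ns (φ n))) (Wn (ns (φ n)))) atTop
      (nhds (a v L)) := by
    have := cont.tendsto (v, L)
    exact this.comp (hvlim.prodMk_nhds hWlim)
  have helim : Tendsto
      (fun n => ⟪a (vn (ns (φ n))) (Wn (ns (φ n))) - a v W, Wn (ns (φ n)) - W⟫)
      atTop (nhds ⟪a v L - a v W, L - W⟫) :=
    (halim.sub tendsto_const_nhds).inner (hWlim.sub tendsto_const_nhds)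
  have hzero : Tendsto
      (fun n => ⟪a (vn (ns (φ n))) (Wn (ns (φ n))) - a v W, Wn (ns (φ n)) - W⟫)
      atTop (nhds 0) := he.comp hns'
  have hEq : ⟪a v L - a v W, L - W⟫ = 0 := tendsto_nhds_unique helim hzero
  have hLW : L = W := by
    by_contra hne
    exact absurd hEq (ne_of_gt (mono v L W hne))
  rw [hLW] at hWlim
  exact hWlim

/-- Almost-everywhere form of Lemma 4.1: a.e. convergence of gradients from
the a.e. vanishing of the monotonicity expression. -/
theorem stmt_6 {N d : ℕ} (Ω : Set (Fin N → ℝ)) (hΩ : MeasurableSet Ω)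
    (p α β : ℝ) (hp : 1 < p) (hα : 0 < α) (hβ : 0 < β)
    (h : (Fin N → ℝ) → ℝ) (hh : Measurable h) (hhpos : ∀ x, 0 ≤ h x)
    (a : (Fin N → ℝ) → ℝ → EuclideanSpace ℝ (Fin d) → EuclideanSpace ℝ (Fin d))
    (ha : ∀ᵐ x ∂(volume.restrict Ω),
      Continuous (fun sξ : ℝ × EuclideanSpace ℝ (Fin d) => a x sξ.1 sξ.2) ∧
      (∀ (s : ℝ) (ξ : EuclideanSpace ℝ (Fin d)), α * ‖ξ‖ ^ p ≤ ⟪a x s ξ, ξ⟫) ∧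
      (∀ (s : ℝ) (ξ : EuclideanSpace ℝ (Fin d)),
        ‖a x s ξ‖ ≤ β * (h x + |s| ^ (p - 1) + ‖ξ‖ ^ (p - 1))) ∧
      (∀ (s : ℝ) (ξ η : EuclideanSpace ℝ (Fin d)), ξ ≠ η →
        0 < ⟪a x s ξ - a x s η, ξ - η⟫))
    (un : ℕ → (Fin N → ℝ) → ℝ) (u : (Fin N → ℝ) → ℝ)
    (hun : ∀ n, Measurable (un n)) (hu : Measurable u)
    (Vn : ℕ → (Fin N → ℝ) → EuclideanSpace ℝ (Fin d))
    (V : (Fin N → ℝ) → EuclideanSpace ℝ (Fin d))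
    (hVn : ∀ n, Measurable (Vn n)) (hV : Measurable V)
    (huconv : ∀ᵐ x ∂(volume.restrict Ω),
      Tendsto (fun n => un n x) atTop (nhds (u x)))
    (hmonot : ∀ᵐ x ∂(volume.restrict Ω),
      Tendsto (fun n => ⟪a x (un n x) (Vn n x) - a x (u x) (V x), Vn n x - V x⟫)
        atTop (nhds 0)) :
    ∀ᵐ x ∂(volume.restrict Ω), Tendsto (fun n => Vn n x) atTop (nhds (V x)) := by
  filter_upwards [ha, huconv, hmonot] with x hx hux hmx
  obtain ⟨cont, coerc, growth, mono⟩ := hx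
  exact key_lemma p α β (h x) hp hα hβ (hhpos x) (a x) cont coerc growth mono
    (fun n => un n x) (u x) hux (fun n => Vn n x) (V x) hmx
end

section
/- (Boundedness step in the proof of Lemma 4.1.) Let p > 1, α, β > 0, h₀ ≥ 0, and let a : ℝ × ℝ^d → ℝ^d be continuous and satisfy, for all s ∈ ℝ and all ξ ≠ η ∈ ℝ^d: a(s,ξ)·ξ ≥ α|ξ|^p, |a(s,ξ)| ≤ β(h₀ + |s|^{p−1} + |ξ|^{p−1}), and (a(s,ξ) − a(s,η))·(ξ − η) > 0. Let (s_n) ⊂ ℝ and (ξ_n) ⊂ ℝ^d be sequences with s_n → s and [a(s_n,ξ_n) − a(s,ξ)]·(ξ_n − ξ) → 0. Then the sequence (ξ_n) is bounded in ℝ^d. -/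
open Filter
open scoped RealInnerProductSpace

lemma key_bound (p α C : ℝ) (hp : 1 < p) (hα : 0 < α) (hC : 0 < C) :
    ∃ R : ℝ, ∀ t : ℝ, 0 ≤ t → α * t ^ p ≤ C * (1 + t + t ^ (p-1)) → t ≤ R := by
  refine ⟨max 1 (max (4*C/α) ((4*C/α) ^ (1/(p-1)))), fun t ht hineq => ?_⟩
  by_contra hlt
  push_neg at hlt
  have h1 : 1 < t := lt_of_le_of_lt (le_max_left _ _) hlt
  have h2 : 4*C/α < t := lt_of_le_of_lt (le_trans (le_max_left _ _) (le_max_right _ _)) hlt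
  have h3 : (4*C/α) ^ (1/(p-1)) ≤ t :=
    le_of_lt (lt_of_le_of_lt (le_trans (le_max_right _ _) (le_max_right _ _)) hlt)
  have hq : 0 < p - 1 := by linarith
  have hct : (0:ℝ) < 4*C/α := by positivity
  have ht0 : (0:ℝ) < t := by linarith
  have ht1 : t ≤ t ^ p := by
    nth_rewrite 1 [← Real.rpow_one t]
    exact Real.rpow_le_rpow_of_exponent_le h1.le (by linarith)
  have htp : 4*C/α ≤ t ^ (p-1) := by
    calc 4*C/α = ((4*C/α) ^ (1/(p-1))) ^ (p-1) := by
          rw [← Real.rpow_mul hct.le, one_div_mul_cancel hq.ne', Real.rpow_one]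
      _ ≤ t ^ (p-1) := Real.rpow_le_rpow (by positivity) h3 hq.le
  have hsplit : t ^ p = t ^ (p-1) * t := by
    have h := Real.rpow_add ht0 (p-1) 1
    rw [sub_add_cancel, Real.rpow_one] at h
    exact h
  have htp0 : 0 < t ^ (p-1) := Real.rpow_pos_of_pos ht0 _
  have htpp : 0 < t ^ p := Real.rpow_pos_of_pos ht0 _
  have hA : 4*C ≤ α * t^(p-1) := by
    rw [div_le_iff₀ hα] at htp; linarith
  have hB : 4*C ≤ α * t := by
    rw [div_lt_iff₀ hα] at h2; linarith
  have hsplit' : α * t ^ p = (α * t^(p-1)) * t := by rw [hsplit]; ring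
  have hsplit'' : α * t ^ p = (α * t) * t^(p-1) := by rw [hsplit]; ring
  have e1 : 4*C*t ≤ α * t ^ p := by
    rw [hsplit']; exact mul_le_mul_of_nonneg_right hA ht0.le
  have e2 : 4*C*t^(p-1) ≤ α * t ^ p := by
    rw [hsplit'']; exact mul_le_mul_of_nonneg_right hB htp0.le
  have e3 : 4*C ≤ α * t ^ p := le_trans hB (mul_le_mul_of_nonneg_left ht1 hα.le)
  nlinarith [mul_pos hα htpp]

open Filter
open scoped RealInnerProductSpace


/-- Boundedness step in the proof of Lemma 4.1. -/
theorem stmt_8 {d : ℕ} (p α β h₀ : ℝ) (hp : 1 < p) (hα : 0 < α) (hβ : 0 < β)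
    (hh₀ : 0 ≤ h₀)
    (a : ℝ → EuclideanSpace ℝ (Fin d) → EuclideanSpace ℝ (Fin d))
    (hacont : Continuous (fun sξ : ℝ × EuclideanSpace ℝ (Fin d) => a sξ.1 sξ.2))
    (hell : ∀ (s : ℝ) (ξ : EuclideanSpace ℝ (Fin d)), α * ‖ξ‖ ^ p ≤ ⟪a s ξ, ξ⟫)
    (hgrowth : ∀ (s : ℝ) (ξ : EuclideanSpace ℝ (Fin d)),
      ‖a s ξ‖ ≤ β * (h₀ + |s| ^ (p - 1) + ‖ξ‖ ^ (p - 1)))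
    (hmon : ∀ (s : ℝ) (ξ η : EuclideanSpace ℝ (Fin d)), ξ ≠ η →
      0 < ⟪a s ξ - a s η, ξ - η⟫)
    (sn : ℕ → ℝ) (s : ℝ) (hs : Tendsto sn atTop (nhds s))
    (ξn : ℕ → EuclideanSpace ℝ (Fin d)) (ξ : EuclideanSpace ℝ (Fin d))
    (hconv : Tendsto (fun n => ⟪a (sn n) (ξn n) - a s ξ, ξn n - ξ⟫)
      atTop (nhds 0)) :
    ∃ R : ℝ, ∀ n, ‖ξn n‖ ≤ R := by
  -- the sequence sn is bounded
  obtain ⟨M, hM⟩ : ∃ M : ℝ, ∀ n, |sn n| ≤ M := by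
    obtain ⟨M, hM⟩ := (hs.abs).bddAbove_range
    exact ⟨M, fun n => hM ⟨n, rfl⟩⟩
  have hM0 : 0 ≤ M := le_trans (abs_nonneg _) (hM 0)
  have hq : 0 ≤ p - 1 := by linarith
  -- bound |sn n|^(p-1)
  have hMs : ∀ n, |sn n| ^ (p-1) ≤ M ^ (p-1) := fun n =>
    Real.rpow_le_rpow (abs_nonneg _) (hM n) hq
  set b := a s ξ with hb
  set C : ℝ := 1 + β*(h₀ + M^(p-1))*‖ξ‖ + ‖b‖*‖ξ‖ + ‖b‖ + β*‖ξ‖ with hC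
  have hCpos : 0 < C := by positivity
  obtain ⟨R₀, hR₀⟩ := key_bound p α C hp hα hCpos
  -- eventually the error term is ≤ 1
  have hEv : ∀ᶠ n in atTop, ⟪a (sn n) (ξn n) - b, ξn n - ξ⟫ < 1 :=
    hconv.eventually_lt_const (by norm_num)
  obtain ⟨N, hN⟩ := eventually_atTop.mp hEv
  have main : ∀ n, N ≤ n → ‖ξn n‖ ≤ R₀ := by
    intro n hn
    set t := ‖ξn n‖ with htdef
    have ht : 0 ≤ t := norm_nonneg _
    refine hR₀ t ht ?_
    have expand : ⟪a (sn n) (ξn n), ξn n⟫ =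
        ⟪a (sn n) (ξn n) - b, ξn n - ξ⟫ + ⟪a (sn n) (ξn n), ξ⟫ + ⟪b, ξn n⟫ - ⟪b, ξ⟫ := by
      simp only [inner_sub_left, inner_sub_right]; ring
    have h1 : α * t ^ p ≤ ⟪a (sn n) (ξn n), ξn n⟫ := hell _ _
    have hE : ⟪a (sn n) (ξn n) - b, ξn n - ξ⟫ < 1 := hN n hn
    have h2 : ⟪a (sn n) (ξn n), ξ⟫ ≤ β * (h₀ + M^(p-1) + t^(p-1)) * ‖ξ‖ := by
      calc ⟪a (sn n) (ξn n), ξ⟫ ≤ ‖a (sn n) (ξn n)‖ * ‖ξ‖ := real_inner_le_norm _ _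
        _ ≤ β * (h₀ + M^(p-1) + t^(p-1)) * ‖ξ‖ := by
            apply mul_le_mul_of_nonneg_right _ (norm_nonneg _)
            calc ‖a (sn n) (ξn n)‖ ≤ β * (h₀ + |sn n|^(p-1) + t^(p-1)) := hgrowth _ _
              _ ≤ β * (h₀ + M^(p-1) + t^(p-1)) := by
                  have := hMs n; nlinarith
    have h3 : ⟪b, ξn n⟫ ≤ ‖b‖ * t := real_inner_le_norm _ _
    have h4 : -⟪b, ξ⟫ ≤ ‖b‖ * ‖ξ‖ := by
      have := abs_real_inner_le_norm b ξ
      have := neg_abs_le (⟪b, ξ⟫ : ℝ)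
      linarith
    have hnn1 : (0:ℝ) ≤ t ^ (p-1) := Real.rpow_nonneg ht _
    have hnn2 : (0:ℝ) ≤ ‖ξ‖ := norm_nonneg _
    have hnn3 : (0:ℝ) ≤ ‖b‖ := norm_nonneg _
    have hnn4 : (0:ℝ) ≤ M ^ (p-1) := Real.rpow_nonneg hM0 _
    rw [expand] at h1
    have pos1 : 0 ≤ β * (h₀ + M^(p-1)) * ‖ξ‖ := by positivity
    have pos2 : 0 ≤ ‖b‖ * ‖ξ‖ := by positivity
    have pos3 : 0 ≤ β * ‖ξ‖ := by positivity
    have hc1 : ‖b‖ ≤ C := by rw [hC]; linarith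
    have hc2 : β * ‖ξ‖ ≤ C := by rw [hC]; linarith
    have hc3 : 1 + β * (h₀ + M^(p-1)) * ‖ξ‖ + ‖b‖ * ‖ξ‖ ≤ C := by rw [hC]; linarith
    have e1 : ‖b‖ * t ≤ C * t := mul_le_mul_of_nonneg_right hc1 ht
    have e2 : β * ‖ξ‖ * t^(p-1) ≤ C * t^(p-1) := mul_le_mul_of_nonneg_right hc2 hnn1
    have h2' : ⟪a (sn n) (ξn n), ξ⟫ ≤ β * (h₀ + M^(p-1)) * ‖ξ‖ + β * ‖ξ‖ * t^(p-1) := by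
      have : β * (h₀ + M^(p-1) + t^(p-1)) * ‖ξ‖ = β * (h₀ + M^(p-1)) * ‖ξ‖ + β * ‖ξ‖ * t^(p-1) := by ring
      linarith [h2, this.le]
    have hgoal : C * (1 + t + t^(p-1)) = C + C * t + C * t^(p-1) := by ring
    linarith [h1, hE, h2', h3, h4, e1, e2, hc3, hgoal.ge]
  refine ⟨max R₀ (∑ i ∈ Finset.range N, ‖ξn i‖), fun n => ?_⟩
  by_cases h : N ≤ n
  · exact le_trans (main n h) (le_max_left _ _)
  · refine le_trans ?_ (le_max_right _ _)
    exact Finset.single_le_sum (f := fun i => ‖ξn i‖) (fun i _ => norm_nonneg _)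
      (Finset.mem_range.2 (lt_of_not_ge h))
end

section
/- (Stampacchia's iteration lemma, Lemma 4.5.) Let ψ : [0,∞) → [0,∞) be a nonincreasing function and suppose there exist M > 0, δ > 1 and γ > 0 such that ψ(h) ≤ M·ψ(k)^δ/(h−k)^γ for all h > k ≥ 0. Then, setting d ≥ 0 by d^γ = M·ψ(0)^{δ−1}·2^{δγ/(δ−1)}, one has ψ(d) = 0. -/
open Real Filter

/-- Stampacchia's iteration lemma (Lemma 4.5). -/
theorem stmt_9 (ψ : ℝ → ℝ) (hnonneg : ∀ k, 0 ≤ k → 0 ≤ ψ k)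
    (hmono : ∀ h k : ℝ, 0 ≤ k → k ≤ h → ψ h ≤ ψ k)
    (M δ γ : ℝ) (hM : 0 < M) (hδ : 1 < δ) (hγ : 0 < γ)
    (hiter : ∀ h k : ℝ, 0 ≤ k → k < h → ψ h ≤ M * ψ k ^ δ / (h - k) ^ γ) :
    ψ ((M * ψ 0 ^ (δ - 1) * 2 ^ (δ * γ / (δ - 1))) ^ (1 / γ)) = 0 := by
  have hδ1 : (0:ℝ) < δ - 1 := by linarith
  set μ : ℝ := γ / (δ - 1) with hμdef
  have hμ : 0 < μ := div_pos hγ hδ1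
  have hμγ : μ * (δ - 1) = γ := div_mul_cancel₀ _ hδ1.ne'
  have hψ0 := hnonneg 0 le_rfl
  clear_value μ
  set X : ℝ := M * ψ 0 ^ (δ - 1) * 2 ^ (δ * γ / (δ - 1)) with hX
  set d : ℝ := X ^ (1/γ) with hd
  rcases eq_or_lt_of_le hψ0 with h0 | h0
  · have hX0 : X = 0 := by
      rw [hX, ← h0, Real.zero_rpow hδ1.ne']
      ring
    rw [hd, hX0, Real.zero_rpow (by positivity)]
    exact h0.symm
  -- main case : 0 < ψ 0
  have hX0 : 0 < X := by
    rw [hX]; positivity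
  have hd0 : 0 < d := Real.rpow_pos_of_pos hX0 _
  have hdγ : d ^ γ = X := by
    rw [hd, ← Real.rpow_mul hX0.le, one_div_mul_cancel hγ.ne', Real.rpow_one]
  set r : ℝ := (2:ℝ) ^ (-μ) with hr
  have hr0 : 0 < r := Real.rpow_pos_of_pos two_pos _
  have hr1 : r < 1 := Real.rpow_lt_one_of_one_lt_of_neg one_lt_two (neg_neg_of_pos hμ)
  set k : ℕ → ℝ := fun n => d * (1 - (1/2:ℝ)^n) with hk
  have hk_nonneg : ∀ n, 0 ≤ k n := by
    intro n
    have h1 : (1/2:ℝ)^n ≤ 1 := pow_le_one₀ (by norm_num) (by norm_num)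
    simp only [hk]
    nlinarith [hd0.le]
  have hk_le : ∀ n, k n ≤ d := by
    intro n
    have h1 : (0:ℝ) ≤ (1/2:ℝ)^n := by positivity
    simp only [hk]
    nlinarith [hd0.le]
  have hlogr : Real.log r = -μ * Real.log 2 := by
    rw [hr, Real.log_rpow two_pos]
  have hlogd : γ * Real.log d =
      Real.log M + (δ-1) * Real.log (ψ 0) + (δ * μ) * Real.log 2 := by
    have h1 : Real.log (d ^ γ) = Real.log X := by rw [hdγ]
    rw [Real.log_rpow hd0] at h1
    rw [hX] at h1
    rw [Real.log_mul (by positivity) (by positivity),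
        Real.log_mul hM.ne' (by positivity),
        Real.log_rpow h0, Real.log_rpow two_pos] at h1
    have h2 : δ * γ / (δ - 1) = δ * μ := by rw [hμdef]; ring
    rw [h2] at h1
    linarith [h1]
  have key : ∀ n, ψ (k n) ≤ ψ 0 * r ^ n := by
    intro n
    induction n with
    | zero => simp [hk]
    | succ n ih =>
      have hpow : (1/2:ℝ)^(n+1) < (1/2:ℝ)^n := by
        apply pow_lt_pow_right_of_lt_one₀ (by norm_num) (by norm_num) (by omega)
      have hlt : k n < k (n+1) := by
        simp only [hk]
        nlinarith [hd0]
      have hdiff : k (n+1) - k n = d * (1/2:ℝ)^(n+1) := by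
        simp only [hk]
        ring
      have hψkn : 0 ≤ ψ (k n) := hnonneg _ (hk_nonneg n)
      have hdenpos : 0 < (k (n+1) - k n) ^ γ := by
        apply Real.rpow_pos_of_pos
        linarith
      have h1 := hiter (k (n+1)) (k n) (hk_nonneg n) hlt
      have h2 : M * ψ (k n) ^ δ / (k (n+1) - k n) ^ γ
          ≤ M * (ψ 0 * r ^ n) ^ δ / (k (n+1) - k n) ^ γ := by
        gcongr
      have hA : 0 < ψ 0 * r ^ n := by positivity
      have hB : 0 < d * (1/2:ℝ)^(n+1) := by positivity
      have h3 : M * (ψ 0 * r ^ n) ^ δ / (d * (1/2:ℝ)^(n+1)) ^ γ = ψ 0 * r ^ (n+1) := by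
        have hLpos : 0 < M * (ψ 0 * r ^ n) ^ δ / (d * (1/2:ℝ)^(n+1)) ^ γ := by
          apply div_pos
          · exact mul_pos hM (Real.rpow_pos_of_pos hA _)
          · exact Real.rpow_pos_of_pos hB _
        have hRpos : 0 < ψ 0 * r ^ (n+1) := by positivity
        rw [← Real.exp_log hLpos, ← Real.exp_log hRpos]
        congr 1
        rw [Real.log_div (by positivity) (Real.rpow_pos_of_pos hB _).ne',
            Real.log_mul hM.ne' (Real.rpow_pos_of_pos hA _).ne',
            Real.log_rpow hA, Real.log_rpow hB,
            Real.log_mul h0.ne' (by positivity),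
            Real.log_mul hd0.ne' (by positivity),
            Real.log_mul h0.ne' (by positivity)]
        have hlog12 : Real.log ((1:ℝ)/2) = -Real.log 2 := by
          rw [one_div, Real.log_inv]
        simp only [Real.log_pow, hlogr, hlog12]
        push_cast
        linear_combination (-1 : ℝ) * hlogd - ((n:ℝ)+1) * Real.log 2 * hμγ
      calc ψ (k (n+1)) ≤ M * ψ (k n) ^ δ / (k (n+1) - k n) ^ γ := h1
        _ ≤ M * (ψ 0 * r ^ n) ^ δ / (k (n+1) - k n) ^ γ := h2
        _ = M * (ψ 0 * r ^ n) ^ δ / (d * (1/2:ℝ)^(n+1)) ^ γ := by rw [hdiff]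
        _ = ψ 0 * r ^ (n+1) := h3
  have hψd_le : ∀ n, ψ d ≤ ψ 0 * r ^ n := fun n =>
    le_trans (hmono d (k n) (hk_nonneg n) (hk_le n)) (key n)
  have htend : Tendsto (fun n : ℕ => ψ 0 * r ^ n) atTop (nhds 0) := by
    have := tendsto_pow_atTop_nhds_zero_of_lt_one hr0.le hr1
    simpa using this.const_mul (ψ 0)
  have hle : ψ d ≤ 0 := ge_of_tendsto htend (Filter.Eventually.of_forall hψd_le)
  exact le_antisymm hle (hnonneg d hd0.le)
end
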